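/- For all integers n ≥ 1 and m ≥ 0, the number of lattice points x ∈ ℕ^n with x_i ≤ m for 1 ≤ i ≤ n-1 and x_1 + ⋯ + x_n ≤ mn equals ∑_{j=0}^{n-1} (-1)^j · C(n-1, j) · C((n-j)(m+1), n). -/

import Mathlib

/-- The Ehrhart count `E_{t_n}(m)`: the number of lattice points of the dilate
`m·Q_{t_n}`, i.e. the number of `x ∈ ℕ^n` with `x i ≤ m` for the first `n - 1`
coordinates and `x 1 + ⋯ + x n ≤ m·n`. -/
noncomputable def Ecount (n m : ℕ) : ℕ :=
  Nat.card {x : Fin n → ℕ // (∀ i : Fin n, (i : ℕ) < n - 1 → x i ≤ m) ∧ ∑ i, x i ≤ m * n}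

open Finset

private lemma list_sum_map_range (f : ℕ → ℕ) (n : ℕ) :
    ((List.range n).map f).sum = ∑ i ∈ Finset.range n, f i := by
  induction n with
  | zero => simp
  | succ n ih =>
      rw [List.range_succ, List.map_append, List.sum_append, Finset.sum_range_succ, ih]
      simp

private lemma adt_length_succ (k n : ℕ) :
    (List.Nat.antidiagonalTuple (k + 1) n).length
      = ∑ j ∈ Finset.range (n + 1), (List.Nat.antidiagonalTuple k j).length := by
  have hdef : List.Nat.antidiagonalTuple (k + 1) n
      = (List.Nat.antidiagonal n).flatMap
          (fun ni => (List.Nat.antidiagonalTuple k ni.2).map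
            ((fun x => Fin.cons ni.1 x) : (Fin k → ℕ) → (Fin (k + 1) → ℕ))) := rfl
  have key : ∀ g : ℕ × ℕ → ℕ,
      ((List.Nat.antidiagonal n).map g).sum = ∑ i ∈ Finset.range (n + 1), g (i, n - i) := by
    intro g
    rw [List.Nat.antidiagonal, List.map_map]
    calc ((List.range (n + 1)).map (g ∘ fun i => (i, n - i))).sum
        = ∑ i ∈ Finset.range (n + 1), (g ∘ fun i => (i, n - i)) i :=
          list_sum_map_range (g ∘ fun i => (i, n - i)) (n + 1)
      _ = ∑ i ∈ Finset.range (n + 1), g (i, n - i) := Finset.sum_congr rfl fun i _ => rfl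
  rw [hdef, List.length_flatMap, key]
  calc ∑ i ∈ Finset.range (n + 1),
        ((List.Nat.antidiagonalTuple k ((i, n - i) : ℕ × ℕ).2).map
          ((fun x => Fin.cons ((i, n - i) : ℕ × ℕ).1 x) : (Fin k → ℕ) → (Fin (k + 1) → ℕ))).length
      = ∑ i ∈ Finset.range (n + 1), (List.Nat.antidiagonalTuple k (n - i)).length :=
        Finset.sum_congr rfl fun i _ => by rw [List.length_map]
    _ = ∑ j ∈ Finset.range (n + 1), (List.Nat.antidiagonalTuple k j).length := by
        have h := Finset.sum_range_reflect
          (fun j => (List.Nat.antidiagonalTuple k j).length) (n + 1)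
        simpa using h

private lemma adt_card (k n : ℕ) :
    (Finset.Nat.antidiagonalTuple (k + 1) n).card = (n + k).choose k := by
  induction k generalizing n with
  | zero => rw [Finset.Nat.antidiagonalTuple_one]; simp
  | succ k ih =>
      have hlen : ∀ K N : ℕ,
          (Finset.Nat.antidiagonalTuple K N).card = (List.Nat.antidiagonalTuple K N).length :=
        fun K N => rfl
      rw [hlen, adt_length_succ]
      have : ∀ j ∈ Finset.range (n + 1),
          (List.Nat.antidiagonalTuple (k + 1) j).length = (j + k).choose k := by
        intro j _
        rw [← hlen, ih]
      rw [Finset.sum_congr rfl this, Nat.sum_range_add_choose n k]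
      rfl

/-- Shifted count: tuples in the antidiagonal with `j` prescribed coordinates `≥ m+1`. -/
private lemma count_filter_card (n m j : ℕ) (hj : j ≤ n) (T : Finset (Fin (n + 1)))
    (hT : T.card = j) :
    ((Finset.Nat.antidiagonalTuple (n + 1) (m * n)).filter
        (fun x => ∀ i ∈ T, m + 1 ≤ x i)).card
      = ((n - j) * (m + 1)).choose n := by
  classical
  have hkey : (n - j) * (m + 1) + j * (m + 1) = m * n + n := by
    rw [← Nat.add_mul, Nat.sub_add_cancel hj]; ring
  have hsumc : ∀ x : Fin (n + 1) → ℕ,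
      (∀ i ∈ T, m + 1 ≤ x i) → j * (m + 1) ≤ ∑ i, x i := by
    intro x hx
    calc j * (m + 1) = ∑ _i ∈ T, (m + 1) := by rw [Finset.sum_const, smul_eq_mul, hT]
    _ ≤ ∑ i ∈ T, x i := Finset.sum_le_sum hx
    _ ≤ ∑ i, x i := Finset.sum_le_sum_of_subset (Finset.subset_univ T)
  by_cases hle : j * (m + 1) ≤ m * n
  · have hc : ∀ x : Fin (n + 1) → ℕ,
        ∑ i, (if i ∈ T then (m + 1) else 0) = j * (m + 1) := by
      intro x
      rw [Finset.sum_ite_mem, Finset.univ_inter, Finset.sum_const, smul_eq_mul, hT]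
    have hcard : ((Finset.Nat.antidiagonalTuple (n + 1) (m * n)).filter
          (fun x => ∀ i ∈ T, m + 1 ≤ x i)).card
        = (Finset.Nat.antidiagonalTuple (n + 1) (m * n - j * (m + 1))).card := by
      apply Finset.card_nbij' (fun x i => x i - (if i ∈ T then (m + 1) else 0))
        (fun y i => y i + (if i ∈ T then (m + 1) else 0))
      · intro x hx
        rw [Finset.mem_coe, Finset.mem_filter] at hx
        obtain ⟨hxA, hxT⟩ := hx
        rw [Finset.mem_coe]
        rw [Finset.Nat.mem_antidiagonalTuple] at hxA ⊢
        show (∑ i, (x i - (if i ∈ T then (m + 1) else 0))) = m * n - j * (m + 1)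
        have hcle : ∀ i, (if i ∈ T then (m + 1) else 0) ≤ x i := by
          intro i
          by_cases hi : i ∈ T
          · simpa [hi] using hxT i hi
          · simp [hi]
        have hsplit : (∑ i, (x i - (if i ∈ T then (m + 1) else 0)))
            + ∑ i, (if i ∈ T then (m + 1) else 0) = ∑ i, x i := by
          rw [← Finset.sum_add_distrib]
          exact Finset.sum_congr rfl fun i _ => Nat.sub_add_cancel (hcle i)
        rw [hc x] at hsplit
        omega
      · intro y hy
        rw [Finset.mem_coe, Finset.Nat.mem_antidiagonalTuple] at hy
        rw [Finset.mem_coe, Finset.mem_filter, Finset.Nat.mem_antidiagonalTuple]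
        constructor
        · show (∑ i, (y i + (if i ∈ T then (m + 1) else 0))) = m * n
          rw [Finset.sum_add_distrib, hc y, hy]
          omega
        · intro i hi
          simp [hi]
      · intro x hx
        rw [Finset.mem_coe, Finset.mem_filter] at hx
        funext i
        show (x i - (if i ∈ T then (m + 1) else 0)) + (if i ∈ T then (m + 1) else 0) = x i
        have : (if i ∈ T then (m + 1) else 0) ≤ x i := by
          by_cases hi : i ∈ T
          · simpa [hi] using hx.2 i hi
          · simp [hi]
        omega
      · intro y _
        funext i
        show (y i + (if i ∈ T then (m + 1) else 0)) - (if i ∈ T then (m + 1) else 0) = y i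
        omega
    rw [hcard, adt_card]
    have harith : m * n - j * (m + 1) + n = (n - j) * (m + 1) := by
      clear hc hcard hsumc
      omega
    rw [harith]
  · rw [Finset.filter_eq_empty_iff.mpr, Finset.card_empty,
      eq_comm, Nat.choose_eq_zero_of_lt (by omega)]
    intro x hx hcon
    rw [Finset.Nat.mem_antidiagonalTuple] at hx
    have := hsumc x hcon
    omega

private lemma ecount_eq (n m : ℕ) :
    Ecount n m = ((Finset.Nat.antidiagonalTuple (n + 1) (m * n)).filter
      (fun x => ∀ i : Fin (n + 1), (i : ℕ) < n - 1 → x i ≤ m)).card := by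
  classical
  rw [Ecount, ← Nat.card_eq_finsetCard]
  have hsnoc : ∀ (f : Fin n → ℕ) (b : ℕ),
      ∑ i : Fin (n + 1), Fin.snoc f b i = (∑ i : Fin n, f i) + b := by
    intro f b
    rw [Fin.sum_univ_castSucc]
    simp
  refine Nat.card_congr
    { toFun := fun x => ⟨Fin.snoc x.1 (m * n - ∑ i, x.1 i), ?_⟩
      invFun := fun y => ⟨Fin.init y.1, ?_, ?_⟩
      left_inv := ?_
      right_inv := ?_ }
  · rw [Finset.mem_filter, Finset.Nat.mem_antidiagonalTuple]
    constructor
    · rw [hsnoc]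
      have := x.2.2
      omega
    · intro i hi
      have hi' : (i : ℕ) < n := by omega
      have hcast : i = Fin.castSucc ⟨(i : ℕ), hi'⟩ := by
        apply Fin.ext; rfl
      rw [hcast, Fin.snoc_castSucc]
      exact x.2.1 ⟨(i : ℕ), hi'⟩ hi
  · intro i hi
    have hy := (Finset.mem_filter.mp y.2).2
    exact hy (Fin.castSucc i) (by simpa using hi)
  · have hy := Finset.Nat.mem_antidiagonalTuple.mp (Finset.mem_filter.mp y.2).1
    rw [Fin.sum_univ_castSucc] at hy
    calc ∑ i : Fin n, Fin.init y.1 i = ∑ i : Fin n, y.1 (Fin.castSucc i) := rfl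
    _ ≤ m * n := by omega
  · intro x
    apply Subtype.ext
    show Fin.init (Fin.snoc x.1 (m * n - ∑ i, x.1 i) : Fin (n + 1) → ℕ) = x.1
    exact Fin.init_snoc _ _
  · intro y
    apply Subtype.ext
    have hy := Finset.Nat.mem_antidiagonalTuple.mp (Finset.mem_filter.mp y.2).1
    rw [Fin.sum_univ_castSucc] at hy
    show Fin.snoc (Fin.init y.1) (m * n - ∑ i : Fin n, Fin.init y.1 i) = y.1
    have hinit : ∑ i : Fin n, Fin.init y.1 i = ∑ i : Fin n, y.1 (Fin.castSucc i) := rfl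
    have hlast : m * n - ∑ i : Fin n, Fin.init y.1 i = y.1 (Fin.last n) := by
      rw [hinit]; omega
    rw [hlast, Fin.snoc_init_self]

theorem stmt8 (n m : ℕ) (hn : 1 ≤ n) :
    (Ecount n m : ℤ) =
      ∑ j ∈ Finset.range n,
        (-1 : ℤ) ^ j * Nat.choose (n - 1) j * Nat.choose ((n - j) * (m + 1)) n := by
  classical
  set A : Finset (Fin (n + 1) → ℕ) := Finset.Nat.antidiagonalTuple (n + 1) (m * n) with hA
  set I : Finset (Fin (n + 1)) := Finset.univ.filter (fun i => (i : ℕ) < n - 1) with hI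
  have hIcard : I.card = n - 1 := by
    have h1 : I = (Finset.range (n - 1)).attachFin
        (fun r hr => lt_of_lt_of_le (Finset.mem_range.mp hr)
          (le_trans (Nat.sub_le n 1) (Nat.le_succ n))) := by
      ext i
      simp [hI, Finset.mem_attachFin]
    rw [h1, Finset.card_attachFin, Finset.card_range]
  have h1 : Ecount n m = (A.filter (fun x => ∀ i ∈ I, x i ≤ m)).card := by
    rw [ecount_eq n m]
    congr 1
    apply Finset.filter_congr
    intro x _
    simp [hI]
  rw [h1]
  calc ((A.filter (fun x => ∀ i ∈ I, x i ≤ m)).card : ℤ)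
      = ∑ x ∈ A, (if ∀ i ∈ I, x i ≤ m then (1 : ℤ) else 0) := by
        rw [Finset.sum_boole]
    _ = ∑ x ∈ A, ∑ T ∈ I.powerset, (if ∀ i ∈ T, m + 1 ≤ x i then (-1 : ℤ) ^ T.card else 0) := by
        refine Finset.sum_congr rfl fun x _ => ?_
        rw [← Finset.sum_filter]
        have hps : I.powerset.filter (fun T => ∀ i ∈ T, m + 1 ≤ x i)
            = (I.filter (fun i => m + 1 ≤ x i)).powerset := by
          ext T
          rw [Finset.mem_filter, Finset.mem_powerset, Finset.mem_powerset]
          constructor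
          · rintro ⟨hTI, hcnd⟩ i hi
            exact Finset.mem_filter.mpr ⟨hTI hi, hcnd i hi⟩
          · intro h
            exact ⟨fun i hi => (Finset.mem_filter.mp (h hi)).1,
              fun i hi => (Finset.mem_filter.mp (h hi)).2⟩
        rw [hps, Finset.sum_powerset_neg_one_pow_card]
        have hiff : (I.filter (fun i => m + 1 ≤ x i) = ∅) ↔ (∀ i ∈ I, x i ≤ m) := by
          rw [Finset.filter_eq_empty_iff]
          constructor
          · intro h i hi
            exact Nat.lt_succ_iff.mp (Nat.not_le.mp (h hi))
          · intro h i hi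
            exact Nat.not_le.mpr (Nat.lt_succ_iff.mpr (h i hi))
        rw [if_congr hiff rfl rfl]
    _ = ∑ T ∈ I.powerset, ∑ x ∈ A, (if ∀ i ∈ T, m + 1 ≤ x i then (-1 : ℤ) ^ T.card else 0) :=
        Finset.sum_comm
    _ = ∑ T ∈ I.powerset,
          ((-1 : ℤ) ^ T.card * (((n - T.card) * (m + 1)).choose n : ℤ)) := by
        refine Finset.sum_congr rfl fun T hT => ?_
        rw [← Finset.sum_filter, Finset.sum_const, nsmul_eq_mul]
        have hj : T.card ≤ n := by
          have h := Finset.card_le_card (Finset.mem_powerset.mp hT)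
          exact le_trans (le_trans h (le_of_eq hIcard)) (Nat.sub_le n 1)
        rw [count_filter_card n m T.card hj T rfl, mul_comm]
    _ = ∑ j ∈ Finset.range (I.card + 1),
          I.card.choose j • ((-1 : ℤ) ^ j * (((n - j) * (m + 1)).choose n : ℤ)) :=
        Finset.sum_powerset_apply_card (fun j => (-1 : ℤ) ^ j * (((n - j) * (m + 1)).choose n : ℤ))
    _ = ∑ j ∈ Finset.range n,
          (-1 : ℤ) ^ j * ((n - 1).choose j : ℤ) * (((n - j) * (m + 1)).choose n : ℤ) := by
        rw [hIcard]
        have hrange : n - 1 + 1 = n := Nat.sub_add_cancel hn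
        rw [hrange]
        refine Finset.sum_congr rfl fun j _ => ?_
        rw [nsmul_eq_mul]
        push_cast
        ring
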